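/- Let A be a unital C*-algebra, q a projection in A, and p' a projection with ‖p'q − p'‖ sufficiently small (e.g. < 1/8). Then there exists a projection p'' ∈ A with p'' ≤ q and ‖p'' − p'‖ < 1/2. -/

import Mathlib

lemma proj_norm_le_one {A : Type*} [NormedRing A] [StarRing A] [CStarRing A]
    {r : A} (h1 : IsIdempotentElem r) (h2 : IsSelfAdjoint r) : ‖r‖ ≤ 1 := by
  have key : ‖r‖ * ‖r‖ = ‖r‖ := by
    rw [← CStarRing.norm_star_mul_self, h2.star_eq, h1.eq]
  nlinarith [norm_nonneg r]

/-- If `q, p'` are projections in a unital C*-algebra with `‖p' q - p'‖ < 1/8`, then there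
is a projection `p'' ≤ q` (i.e. `p'' q = p''`) with `‖p'' - p'‖ < 1/2`. -/
theorem projection_almost_under_projection {A : Type*} [CStarAlgebra A]
    (q p' : A) (hq : IsIdempotentElem q) (hq' : IsSelfAdjoint q)
    (hp : IsIdempotentElem p') (hp' : IsSelfAdjoint p')
    (h : ‖p' * q - p'‖ < 1 / 8) :
    ∃ p'' : A, IsIdempotentElem p'' ∧ IsSelfAdjoint p'' ∧ p'' * q = p'' ∧
      ‖p'' - p'‖ < 1 / 2 := by
  set ε := ‖p' * q - p'‖ with hε
  set b := q * p' * q with hbdef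
  have hqn : ‖q‖ ≤ 1 := proj_norm_le_one hq hq'
  have hpn : ‖p'‖ ≤ 1 := proj_norm_le_one hp hp'
  have hb : IsSelfAdjoint b := by
    simp only [hbdef, IsSelfAdjoint, star_mul, hq'.star_eq, hp'.star_eq, mul_assoc]
  have hqp : ‖q * p' - p'‖ = ε := by
    have e : q * p' - p' = star (p' * q - p') := by
      simp [star_sub, star_mul, hq'.star_eq, hp'.star_eq]
    rw [e, norm_star]
  have hε0 : (0:ℝ) ≤ ε := norm_nonneg _
  -- ‖b - p'‖ ≤ 2 ε
  have h1 : ‖b - p'‖ ≤ 2 * ε := by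
    have e : b - p' = q * (p' * q - p') + (q * p' - p') := by
      simp only [hbdef, mul_sub, mul_assoc]; abel
    calc ‖b - p'‖ = ‖q * (p' * q - p') + (q * p' - p')‖ := by rw [e]
      _ ≤ ‖q * (p' * q - p')‖ + ‖q * p' - p'‖ := norm_add_le _ _
      _ ≤ ‖q‖ * ‖p' * q - p'‖ + ε := by rw [hqp]; gcongr; exact norm_mul_le _ _
      _ ≤ 1 * ε + ε := by gcongr
      _ = 2 * ε := by ring
  -- ‖b * b - b‖ ≤ ε
  have h2 : ‖b * b - b‖ ≤ ε := by
    have e : b * b - b = q * (p' * ((q * p' - p') * q)) := by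
      simp only [hbdef, mul_sub, sub_mul, mul_assoc]
      rw [show q * (q * (p' * q)) = q * (p' * q) from by rw [← mul_assoc q q, hq.eq]]
      rw [show p' * (p' * q) = p' * q from by rw [← mul_assoc, hp.eq]]
    calc ‖b * b - b‖ = ‖q * (p' * ((q * p' - p') * q))‖ := by rw [e]
      _ ≤ ‖q‖ * ‖p' * ((q * p' - p') * q)‖ := norm_mul_le _ _
      _ ≤ ‖q‖ * (‖p'‖ * ‖(q * p' - p') * q‖) := by gcongr; exact norm_mul_le _ _
      _ ≤ ‖q‖ * (‖p'‖ * (‖q * p' - p'‖ * ‖q‖)) := by gcongr; exact norm_mul_le _ _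
      _ ≤ 1 * (1 * (ε * 1)) := by rw [hqp]; gcongr
      _ = ε := by ring
  -- spectral bound
  have hspec : ∀ x ∈ spectrum ℝ b, |x ^ 2 - x| ≤ ε := by
    intro x hx
    have hcfc : cfc (fun x : ℝ => x ^ 2 - x) b = b * b - b := by
      rw [cfc_sub (fun x : ℝ => x ^ 2) (fun x : ℝ => x) b (by fun_prop) (by fun_prop)]
      rw [show (fun x : ℝ => x ^ 2) = fun x : ℝ => (id x) ^ 2 from rfl]
      rw [cfc_pow (id : ℝ → ℝ) 2 b (by fun_prop) hb, cfc_id ℝ b hb, cfc_id' ℝ b hb, sq]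
    calc |x ^ 2 - x| = ‖(fun x : ℝ => x ^ 2 - x) x‖ := rfl
      _ ≤ ‖cfc (fun x : ℝ => x ^ 2 - x) b‖ :=
          norm_apply_le_norm_cfc (fun x : ℝ => x ^ 2 - x) b hx (by fun_prop) hb
      _ = ‖b * b - b‖ := by rw [hcfc]
      _ ≤ ε := h2
  have hgap : ∀ x ∈ spectrum ℝ b, x < 1/5 ∨ 4/5 < x := by
    intro x hx
    by_contra hc
    push_neg at hc
    obtain ⟨hl, hr⟩ := hc
    have hs := hspec x hx
    rw [abs_le] at hs
    nlinarith [hs.1, hs.2]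
  -- the functions
  set g : ℝ → ℝ := fun x => min 1 (max 0 ((5 * x - 1) / 3)) with hgdef
  have hgc : Continuous g := by fun_prop
  set H : ℝ → ℝ := fun x => g x / (max x (1/5)) ^ 2 with hHdef
  have hmaxpos : ∀ x : ℝ, (0:ℝ) < max x (1/5) :=
    fun x => lt_of_lt_of_le (by norm_num) (le_max_right _ _)
  have hHc : Continuous H := by
    apply hgc.div (by fun_prop)
    intro x
    exact pow_ne_zero _ (ne_of_gt (hmaxpos x))
  have hg0 : ∀ x : ℝ, x < 1/5 → g x = 0 := by
    intro x hx
    simp only [hgdef]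
    rw [max_eq_left (by linarith), min_eq_right (by norm_num)]
  have hg1 : ∀ x : ℝ, 4/5 < x → g x = 1 := by
    intro x hx
    simp only [hgdef]
    rw [max_eq_right (by linarith), min_eq_left (by linarith)]
  set p'' := cfc g b with hp''def
  have hbq : b * q = b := by
    simp only [hbdef, mul_assoc, hq.eq]
  -- p'' = b * cfc H b * b
  have key : p'' = b * cfc H b * b := by
    have e1 : cfc g b = cfc (fun x : ℝ => (x * H x) * x) b := by
      apply cfc_congr
      intro x hx
      rcases hgap x hx with hl | hr
      · simp only [hHdef, hg0 x hl, zero_div, mul_zero, zero_mul]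
      · have hmx : max x (1/5 : ℝ) = x := max_eq_left (by linarith)
        have hx0 : x ≠ 0 := by intro h0; rw [h0] at hr; norm_num at hr
        simp only [hHdef, hmx]
        field_simp
    rw [hp''def, e1,
      cfc_mul (fun x : ℝ => x * H x) (fun x : ℝ => x) b (by fun_prop) (by fun_prop),
      cfc_mul (fun x : ℝ => x) H b (by fun_prop) hHc.continuousOn,
      cfc_id' ℝ b hb]
  refine ⟨p'', ?_, ?_, ?_, ?_⟩
  · show p'' * p'' = p''
    rw [hp''def, ← cfc_mul g g b hgc.continuousOn hgc.continuousOn]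
    apply cfc_congr
    intro x hx
    rcases hgap x hx with hl | hr
    · simp [hg0 x hl]
    · simp [hg1 x hr]
  · exact cfc_predicate g b
  · rw [key, mul_assoc, mul_assoc, hbq, ← mul_assoc]
  · -- norm estimate
    have hd : ‖p'' - b‖ ≤ 5/32 := by
      have e2 : p'' - b = cfc (fun x : ℝ => g x - x) b := by
        rw [hp''def, cfc_sub g (fun x : ℝ => x) b hgc.continuousOn (by fun_prop),
          cfc_id' ℝ b hb]
      rw [e2]
      apply norm_cfc_le (by norm_num)
      intro x hx
      have hs := hspec x hx
      rw [abs_le] at hs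
      rw [Real.norm_eq_abs, abs_le]
      rcases hgap x hx with hl | hr
      · rw [hg0 x hl]
        constructor
        · nlinarith [hs.1, hs.2]
        · nlinarith [hs.1, hs.2]
      · rw [hg1 x hr]
        constructor
        · nlinarith [hs.1, hs.2]
        · nlinarith [hs.1, hs.2]
    calc ‖p'' - p'‖ = ‖(p'' - b) + (b - p')‖ := by abel_nf
      _ ≤ ‖p'' - b‖ + ‖b - p'‖ := norm_add_le _ _
      _ ≤ 5/32 + 2 * ε := by gcongr
      _ < 1/2 := by linarith
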